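/- The tensor defined by T_{ijk} = 1 if i = min(j,k) and 0 otherwise is a bicooling tensor (T_{ijk}=0 for i>j or i>k, stochastic in i), and it is an extreme point of the bicooling polytope; moreover T(p,q)_i = p_i ∑_{l≥i} q_l + q_i ∑_{l>i} p_l, which is the distribution of min of two independent random variables with laws p and q. -/

import Mathlib

open Finset

def IsProbVec {d : ℕ} (p : Fin d → ℝ) : Prop :=
  (∀ i, 0 ≤ p i) ∧ ∑ i, p i = 1

def tApply {d : ℕ} (T : Fin d → Fin d → Fin d → ℝ) (p q : Fin d → ℝ) : Fin d → ℝ :=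
  fun i => ∑ j, ∑ k, T i j k * p j * q k

def BicoolingSet (d : ℕ) : Set (Fin d → Fin d → Fin d → ℝ) :=
  {T | (∀ i j k, 0 ≤ T i j k) ∧ (∀ j k, ∑ i, T i j k = 1) ∧
       (∀ i j k : Fin d, (j < i ∨ k < i) → T i j k = 0)}

/-- The "minimum" tensor: `T_{ijk} = 1` iff `i = min(j,k)`. -/
def Tmin (d : ℕ) : Fin d → Fin d → Fin d → ℝ :=
  fun i j k => if i = min j k then 1 else 0

lemma bicool_le_one {d : ℕ} {T : Fin d → Fin d → Fin d → ℝ} (hT : T ∈ BicoolingSet d)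
    (i j k : Fin d) : T i j k ≤ 1 := by
  calc T i j k ≤ ∑ i', T i' j k :=
        Finset.single_le_sum (fun i' _ => hT.1 i' j k) (mem_univ i)
    _ = 1 := hT.2.1 j k

lemma Tmin_mem (d : ℕ) : Tmin d ∈ BicoolingSet d := by
  refine ⟨fun i j k => ?_, fun j k => ?_, fun i j k h => ?_⟩
  · unfold Tmin; positivity
  · simp [Tmin]
  · unfold Tmin
    rw [if_neg]
    rintro rfl
    rcases h with h | h
    · exact absurd (min_le_left j k) (not_le.2 h)
    · exact absurd (min_le_right j k) (not_le.2 h)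

lemma combo_zero {a b u v : ℝ} (ha : 0 < a) (hb : 0 < b)
    (hu0 : 0 ≤ u) (hv0 : 0 ≤ v) (h : a * u + b * v = 0) : u = 0 ∧ v = 0 := by
  constructor <;> nlinarith

lemma combo_one {a b u v : ℝ} (ha : 0 < a) (hb : 0 < b) (hab : a + b = 1)
    (hu1 : u ≤ 1) (hv1 : v ≤ 1) (h : a * u + b * v = 1) : u = 1 ∧ v = 1 := by
  constructor <;> nlinarith

theorem stmt13 (d : ℕ) :
    Tmin d ∈ BicoolingSet d ∧
    Tmin d ∈ Set.extremePoints ℝ (BicoolingSet d) ∧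
    (∀ p q : Fin d → ℝ, IsProbVec p → IsProbVec q → ∀ i : Fin d,
      tApply (Tmin d) p q i =
        p i * (∑ l ∈ Finset.univ.filter (fun l : Fin d => i ≤ l), q l) +
        q i * (∑ l ∈ Finset.univ.filter (fun l : Fin d => i < l), p l)) := by
  refine ⟨Tmin_mem d, ?_, ?_⟩
  · refine ⟨Tmin_mem d, fun x hx y hy hseg => ?_⟩
    obtain ⟨a, b, ha, hb, hab, habx⟩ := hseg
    have key : ∀ i j k, x i j k = Tmin d i j k ∧ y i j k = Tmin d i j k := by
      intro i j k
      have h : a * x i j k + b * y i j k = Tmin d i j k := by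
        have := congrFun (congrFun (congrFun habx i) j) k
        simpa using this
      by_cases hi : i = min j k
      · have h1 : Tmin d i j k = 1 := by simp [Tmin, hi]
        rw [h1] at h ⊢
        exact combo_one ha hb hab (bicool_le_one hx i j k) (bicool_le_one hy i j k) h
      · have h0 : Tmin d i j k = 0 := by simp [Tmin, hi]
        rw [h0] at h ⊢
        exact combo_zero ha hb (hx.1 i j k) (hy.1 i j k) h
    funext i j k
    exact (key i j k).1
  · intro p q hp hq i
    unfold tApply
    have inner : ∀ j : Fin d, (∑ k, Tmin d i j k * p j * q k) =
        (if j = i then p i * (∑ l ∈ Finset.univ.filter (fun l : Fin d => i ≤ l), q l)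
         else if i < j then p j * q i else 0) := by
      intro j
      rcases lt_trichotomy j i with hji | hji | hji
      · rw [if_neg hji.ne, if_neg (not_lt.2 hji.le)]
        apply Finset.sum_eq_zero
        intro k _
        have : Tmin d i j k = 0 := by
          unfold Tmin
          rw [if_neg]
          rintro rfl
          exact absurd (min_le_left j k) (not_le.2 hji)
        simp [this]
      · subst hji
        rw [if_pos rfl, Finset.mul_sum, Finset.sum_filter]
        apply Finset.sum_congr rfl
        intro k _
        unfold Tmin
        by_cases hk : j ≤ k
        · rw [if_pos hk, if_pos (by simp [min_eq_left hk])]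
          ring
        · rw [if_neg hk, if_neg (by
            intro h
            exact hk (h ▸ min_le_right j k)), ]
          simp
      · rw [if_neg hji.ne', if_pos hji]
        have : ∀ k : Fin d, Tmin d i j k * p j * q k = if k = i then p j * q i else 0 := by
          intro k
          by_cases hk : k = i
          · subst hk
            have h1 : Tmin d k j k = 1 := by
              simp [Tmin, min_eq_right hji.le]
            rw [if_pos rfl, h1]; ring
          · have : Tmin d i j k = 0 := by
              unfold Tmin
              rw [if_neg]
              intro h
              rcases min_choice j k with hm | hm
              · exact hji.ne' (h.trans hm).symm
              · exact hk (h.trans hm).symm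
            simp [this, hk]
        rw [Finset.sum_congr rfl (fun k _ => this k),
          Finset.sum_ite_eq' univ i (fun _ => p j * q i)]
        simp
    rw [Finset.sum_congr rfl (fun j _ => inner j)]
    have split : ∀ j : Fin d,
        (if j = i then p i * (∑ l ∈ Finset.univ.filter (fun l : Fin d => i ≤ l), q l)
         else if i < j then p j * q i else 0) =
        (if j = i then p i * (∑ l ∈ Finset.univ.filter (fun l : Fin d => i ≤ l), q l) else 0)
          + (if i < j then p j * q i else 0) := by
      intro j
      by_cases h : j = i
      · subst h; simp
      · simp [h]
    rw [Finset.sum_congr rfl (fun j _ => split j), Finset.sum_add_distrib,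
      Finset.sum_ite_eq' univ i, ← Finset.sum_filter]
    simp only [mem_univ, if_pos]
    congr 1
    rw [← Finset.sum_mul, mul_comm]
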